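/- Let W = S_{n+1} be the symmetric group acting as the Weyl group of type A_n, and let α_{ij} = α_i + ⋯ + α_{j-1} for 1 ≤ i < j ≤ n+1. For w ∈ S_{n+1}, there is an edge w → w s_{α_{ij}} in the quantum Bruhat graph if and only if there is no k with i < k < j and w(i) ≺ w(k) ≺ w(j), where ≺ denotes the circular order starting at w(i). Moreover, this edge is a quantum edge if and only if w(i) > w(j). -/
import Mathlib


/-!
STATEMENT 3: Description of the quantum Bruhat graph in type `A_n` (Lenart).

The Weyl group is `S_{n+1}`, acting on `Fin (n+1)`; the reflection in the root
`α_{ij} = α_i + ⋯ + α_{j-1}` (for `i < j`) is the transposition `(i j)`, the length is the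
number of inversions, and `⟨2ρ, α_{ij}^∨⟩ = 2 (j - i)`.  The circular order starting at `a`
is measured by `circDist a b = (b - a) mod (n+1)`; `w(k)` lies strictly between `w(i)` and
`w(j)` in the circular order starting at `w(i)` iff
`0 < circDist (w i) (w k) < circDist (w i) (w j)`.

There is an edge `w → w s_{α_{ij}}` in the quantum Bruhat graph iff there is no `k` with
`i < k < j` and `w(i) ≺ w(k) ≺ w(j)`; and (given the edge exists) it is a quantum edge iff
`w(i) > w(j)`.
-/

/-- Number of inversions of a permutation of `Fin m` = Coxeter length in type A. -/
def invLength {m : ℕ} (w : Equiv.Perm (Fin m)) : ℕ :=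
  (Finset.univ.filter (fun p : Fin m × Fin m => p.1 < p.2 ∧ w p.2 < w p.1)).card

/-- `circDist m a b` : position of `b` in the circular order on `Fin m` starting at `a`. -/
def circDist {m : ℕ} (a b : Fin m) : ℕ := (b.val + m - a.val) % m

private lemma circDist_eq {m : ℕ} (a b : Fin m) :
    circDist a b = if a.val ≤ b.val then b.val - a.val else b.val + m - a.val := by
  have h1 := a.isLt; have h2 := b.isLt
  unfold circDist
  split_ifs with h
  · have e : b.val + m - a.val = (b.val - a.val) + m := by omega
    rw [e, Nat.add_mod_right, Nat.mod_eq_of_lt (by omega)]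
  · rw [Nat.mod_eq_of_lt (by omega)]

private lemma circ_lt {m : ℕ} {a b c : Fin m} (hba : b ≠ a) (hbc : b ≠ c) (hac : a < c) :
    (0 < circDist a b ∧ circDist a b < circDist a c) ↔ (a < b ∧ b < c) := by
  have h1 := a.isLt; have h2 := b.isLt; have h3 := c.isLt
  have e1 : b.val ≠ a.val := fun h => hba (Fin.val_injective h)
  have e2 : b.val ≠ c.val := fun h => hbc (Fin.val_injective h)
  rw [circDist_eq, circDist_eq]
  simp only [Fin.lt_def] at hac ⊢
  split_ifs <;> omega

private lemma circ_gt {m : ℕ} {a b c : Fin m} (hba : b ≠ a) (hbc : b ≠ c) (hca : c < a) :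
    (0 < circDist a b ∧ circDist a b < circDist a c) ↔ (b < c ∨ a < b) := by
  have h1 := a.isLt; have h2 := b.isLt; have h3 := c.isLt
  have e1 : b.val ≠ a.val := fun h => hba (Fin.val_injective h)
  have e2 : b.val ≠ c.val := fun h => hbc (Fin.val_injective h)
  rw [circDist_eq, circDist_eq]
  simp only [Fin.lt_def] at hca ⊢
  split_ifs <;> omega

private lemma invLength_eq_sum {m : ℕ} (v : Equiv.Perm (Fin m)) :
    (invLength v : ℤ) =
      ∑ p : Fin m × Fin m, (if p.1 < p.2 ∧ v p.2 < v p.1 then (1 : ℤ) else 0) := by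
  rw [invLength, Finset.card_filter]
  push_cast
  rfl

private def gfun {m : ℕ} (u w : Equiv.Perm (Fin m)) (p q : Fin m) : ℤ :=
  (if p < q ∧ u q < u p then (1 : ℤ) else 0) - (if p < q ∧ w q < w p then (1 : ℤ) else 0)

private lemma sum_decomp {m : ℕ} {i j : Fin m} (hne : i ≠ j) (g : Fin m → Fin m → ℤ)
    (hg0 : ∀ p q : Fin m, p ≠ i → p ≠ j → q ≠ i → q ≠ j → g p q = 0) :
    ∑ p : Fin m, ∑ q : Fin m, g p q =
      g i i + g i j + g j i + g j j +
        ∑ k ∈ (Finset.univ.erase i).erase j, (g i k + g j k + (g k i + g k j)) := by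
  have hjmem : j ∈ Finset.univ.erase i := Finset.mem_erase.mpr ⟨hne.symm, Finset.mem_univ j⟩
  set S := (Finset.univ.erase i).erase j with hS
  have hSmem : ∀ k ∈ S, k ≠ i ∧ k ≠ j := by
    intro k hk
    simp only [hS, Finset.mem_erase] at hk
    exact ⟨hk.2.1, hk.1⟩
  have hsplit : ∀ f : Fin m → ℤ, ∑ p, f p = f i + (f j + ∑ p ∈ S, f p) := by
    intro f
    rw [← Finset.add_sum_erase _ f (Finset.mem_univ i), ← Finset.add_sum_erase _ f hjmem]
  rw [hsplit (fun p => ∑ q, g p q), hsplit (g i), hsplit (g j)]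
  have e4 : ∑ p ∈ S, ∑ q, g p q = ∑ p ∈ S, (g p i + g p j) := by
    apply Finset.sum_congr rfl
    intro p hp
    obtain ⟨hpi, hpj⟩ := hSmem p hp
    rw [hsplit (g p), Finset.sum_eq_zero
      (fun q hq => hg0 p q hpi hpj (hSmem q hq).1 (hSmem q hq).2)]
    ring
  rw [e4]
  simp only [Finset.sum_add_distrib]
  ring

set_option maxHeartbeats 1600000 in
private lemma key {m : ℕ} (w : Equiv.Perm (Fin m)) {i j : Fin m} (hij : i < j)
    (hw : w i < w j) :
    (invLength (w * Equiv.swap i j) : ℤ) = (invLength w : ℤ) + 1 +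
      2 * ((Finset.univ.filter
        (fun k : Fin m => i < k ∧ k < j ∧ w i < w k ∧ w k < w j)).card : ℤ) := by
  have hne : i ≠ j := hij.ne
  set u := w * Equiv.swap i j with hu
  have hui : u i = w j := by simp [hu, Equiv.Perm.mul_apply]
  have huj : u j = w i := by simp [hu, Equiv.Perm.mul_apply]
  have huk : ∀ k : Fin m, k ≠ i → k ≠ j → u k = w k := by
    intro k hk1 hk2
    simp [hu, Equiv.Perm.mul_apply, Equiv.swap_apply_of_ne_of_ne hk1 hk2]
  have htot : (invLength u : ℤ) - (invLength w : ℤ) =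
      ∑ p : Fin m, ∑ q : Fin m, gfun u w p q := by
    rw [invLength_eq_sum, invLength_eq_sum, ← Finset.sum_sub_distrib, Fintype.sum_prod_type]
    rfl
  have hg0 : ∀ p q : Fin m, p ≠ i → p ≠ j → q ≠ i → q ≠ j → gfun u w p q = 0 := by
    intro p q hpi hpj hqi hqj
    simp [gfun, huk p hpi hpj, huk q hqi hqj]
  rw [sum_decomp hne (gfun u w) hg0] at htot
  have hgii : gfun u w i i = 0 := by simp [gfun]
  have hgjj : gfun u w j j = 0 := by simp [gfun]
  have hgji : gfun u w j i = 0 := by simp [gfun, hij.asymm]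
  have hgij : gfun u w i j = 1 := by simp [gfun, hui, huj, hij, hw, hw.asymm]
  set S := (Finset.univ.erase i).erase j with hS
  have hSmem : ∀ k ∈ S, k ≠ i ∧ k ≠ j := by
    intro k hk
    simp only [hS, Finset.mem_erase] at hk
    exact ⟨hk.2.1, hk.1⟩
  have hC3 : ∀ k ∈ S, gfun u w i k + gfun u w j k + (gfun u w k i + gfun u w k j) =
      2 * (if i < k ∧ k < j ∧ w i < w k ∧ w k < w j then (1 : ℤ) else 0) := by
    intro k hk
    obtain ⟨hki, hkj⟩ := hSmem k hk
    have e1 : (w k).val ≠ (w i).val := fun h => hki (w.injective (Fin.val_injective h))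
    have e2 : (w k).val ≠ (w j).val := fun h => hkj (w.injective (Fin.val_injective h))
    have e3 : k.val ≠ i.val := fun h => hki (Fin.val_injective h)
    have e4 : k.val ≠ j.val := fun h => hkj (Fin.val_injective h)
    have h1 : i.val < j.val := hij
    have h2 : (w i).val < (w j).val := hw
    simp only [gfun, huk k hki hkj, hui, huj, Fin.lt_def]
    split_ifs <;> omega
  have hext : ∑ k ∈ S, (if i < k ∧ k < j ∧ w i < w k ∧ w k < w j then (1 : ℤ) else 0) =
      ∑ k : Fin m, (if i < k ∧ k < j ∧ w i < w k ∧ w k < w j then (1 : ℤ) else 0) := by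
    apply Finset.sum_subset (Finset.subset_univ S)
    intro x _ hx
    have hxij : x = j ∨ x = i := by
      simp only [hS, Finset.mem_erase, Finset.mem_univ, and_true, not_and, not_ne_iff] at hx
      by_cases hxj : x = j
      · exact Or.inl hxj
      · exact Or.inr (hx hxj)
    rcases hxij with rfl | rfl
    · simp [lt_irrefl]
    · simp [lt_irrefl]
  have hcard : ((Finset.univ.filter
      (fun k : Fin m => i < k ∧ k < j ∧ w i < w k ∧ w k < w j)).card : ℤ) =
      ∑ k : Fin m, (if i < k ∧ k < j ∧ w i < w k ∧ w k < w j then (1 : ℤ) else 0) := by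
    rw [Finset.card_filter]
    push_cast
    rfl
  have hfin : ∑ k ∈ S, (gfun u w i k + gfun u w j k + (gfun u w k i + gfun u w k j)) =
      2 * ((Finset.univ.filter
        (fun k : Fin m => i < k ∧ k < j ∧ w i < w k ∧ w k < w j)).card : ℤ) := by
    rw [Finset.sum_congr rfl hC3, ← Finset.mul_sum, hext, hcard]
  rw [hgii, hgij, hgji, hgjj, hfin] at htot
  linarith

private lemma key' {m : ℕ} (w : Equiv.Perm (Fin m)) {i j : Fin m} (hij : i < j)
    (hw : w j < w i) :
    (invLength (w * Equiv.swap i j) : ℤ) = (invLength w : ℤ) - 1 -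
      2 * ((Finset.univ.filter
        (fun k : Fin m => i < k ∧ k < j ∧ w j < w k ∧ w k < w i)).card : ℤ) := by
  have hi' : (w * Equiv.swap i j) i = w j := by
    rw [Equiv.Perm.mul_apply, Equiv.swap_apply_left]
  have hj' : (w * Equiv.swap i j) j = w i := by
    rw [Equiv.Perm.mul_apply, Equiv.swap_apply_right]
  have hw' : (w * Equiv.swap i j) i < (w * Equiv.swap i j) j := by
    rw [hi', hj']; exact hw
  have h := key (w * Equiv.swap i j) hij hw'
  rw [mul_assoc, Equiv.swap_mul_self, mul_one] at h
  have hfilter : Finset.univ.filter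
      (fun k : Fin m => i < k ∧ k < j ∧ (w * Equiv.swap i j) i < (w * Equiv.swap i j) k ∧
        (w * Equiv.swap i j) k < (w * Equiv.swap i j) j) =
      Finset.univ.filter (fun k : Fin m => i < k ∧ k < j ∧ w j < w k ∧ w k < w i) := by
    apply Finset.filter_congr
    intro k _
    constructor
    · rintro ⟨h1, h2, h3, h4⟩
      have hk : (w * Equiv.swap i j) k = w k := by
        rw [Equiv.Perm.mul_apply, Equiv.swap_apply_of_ne_of_ne h1.ne' h2.ne]
      rw [hk, hi'] at h3
      rw [hk, hj'] at h4
      exact ⟨h1, h2, h3, h4⟩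
    · rintro ⟨h1, h2, h3, h4⟩
      have hk : (w * Equiv.swap i j) k = w k := by
        rw [Equiv.Perm.mul_apply, Equiv.swap_apply_of_ne_of_ne h1.ne' h2.ne]
      refine ⟨h1, h2, ?_, ?_⟩
      · rw [hk, hi']; exact h3
      · rw [hk, hj']; exact h4
  rw [hfilter] at h
  linarith

theorem quantum_bruhat_graph_type_A (n : ℕ) (w : Equiv.Perm (Fin (n + 1)))
    (i j : Fin (n + 1)) (hij : i < j) :
    -- the edge `w → w s_{α_{ij}}` exists iff there is no `k` with `i < k < j` and
    -- `w(i) ≺ w(k) ≺ w(j)` in the circular order starting at `w(i)` …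
    ((invLength (w * Equiv.swap i j) = invLength w + 1 ∨
        (invLength (w * Equiv.swap i j) : ℤ) =
          (invLength w : ℤ) - 2 * ((j : ℤ) - (i : ℤ)) + 1)
      ↔ ¬∃ k : Fin (n + 1), i < k ∧ k < j ∧
          0 < circDist (w i) (w k) ∧ circDist (w i) (w k) < circDist (w i) (w j)) ∧
    -- …and, given that the edge exists, it is a quantum edge iff `w i > w j`.
    ((invLength (w * Equiv.swap i j) = invLength w + 1 ∨
        (invLength (w * Equiv.swap i j) : ℤ) =
          (invLength w : ℤ) - 2 * ((j : ℤ) - (i : ℤ)) + 1) →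
      ((invLength (w * Equiv.swap i j) : ℤ) =
          (invLength w : ℤ) - 2 * ((j : ℤ) - (i : ℤ)) + 1 ↔ w j < w i)) := by
  have hij' : i.val < j.val := hij
  have hwne : w i ≠ w j := fun h => hij.ne (w.injective h)
  rcases lt_or_gt_of_ne hwne with hw | hw
  · -- case w i < w j
    have hkey := key w hij hw
    set N := (Finset.univ.filter
      (fun k : Fin (n + 1) => i < k ∧ k < j ∧ w i < w k ∧ w k < w j)).card with hN
    constructor
    · constructor
      · rintro (h | h)
        · have hN0 : N = 0 := by omega
          rintro ⟨k, hk1, hk2, hk3, hk4⟩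
          have hkne1 : w k ≠ w i := fun h' => hk1.ne' (w.injective h')
          have hkne2 : w k ≠ w j := fun h' => hk2.ne (w.injective h')
          have hlin := (circ_lt hkne1 hkne2 hw).mp ⟨hk3, hk4⟩
          have hmem : k ∈ Finset.univ.filter
              (fun k : Fin (n + 1) => i < k ∧ k < j ∧ w i < w k ∧ w k < w j) := by
            simp [hk1, hk2, hlin.1, hlin.2]
          rw [hN] at hN0
          rw [Finset.card_eq_zero.mp hN0] at hmem
          exact absurd hmem (Finset.notMem_empty k)
        · exfalso; omega
      · intro h
        left
        have hN0 : N = 0 := by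
          rw [hN, Finset.card_eq_zero, Finset.filter_eq_empty_iff]
          rintro k - ⟨hk1, hk2, hk3, hk4⟩
          have hkne1 : w k ≠ w i := fun h' => hk1.ne' (w.injective h')
          have hkne2 : w k ≠ w j := fun h' => hk2.ne (w.injective h')
          exact h ⟨k, hk1, hk2, (circ_lt hkne1 hkne2 hw).mpr ⟨hk3, hk4⟩⟩
        omega
    · intro _
      constructor
      · intro hq; exfalso; omega
      · intro hlt; exact absurd hlt hw.asymm
  · -- case w j < w i
    have hkey := key' w hij hw
    set M := (Finset.univ.filter
      (fun k : Fin (n + 1) => i < k ∧ k < j ∧ w j < w k ∧ w k < w i)).card with hM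
    have hIoo : Finset.univ.filter
        (fun k : Fin (n + 1) => i < k ∧ k < j ∧ w j < w k ∧ w k < w i) =
        (Finset.Ioo i j).filter (fun k => w j < w k ∧ w k < w i) := by
      ext k
      simp [Finset.mem_Ioo, and_assoc]
    have hcardIoo : (Finset.Ioo i j).card = j.val - i.val - 1 := Fin.card_Ioo i j
    have hMeq : M = j.val - i.val - 1 ↔
        ∀ k : Fin (n + 1), i < k → k < j → (w j < w k ∧ w k < w i) := by
      rw [hM, hIoo]
      constructor
      · intro h k hk1 hk2
        have hle : (Finset.Ioo i j).card ≤
            ((Finset.Ioo i j).filter (fun k => w j < w k ∧ w k < w i)).card := by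
          rw [h, hcardIoo]
        have heq := Finset.eq_of_subset_of_card_le (Finset.filter_subset _ _) hle
        exact Finset.filter_eq_self.mp heq k (Finset.mem_Ioo.mpr ⟨hk1, hk2⟩)
      · intro h
        rw [Finset.filter_eq_self.mpr (fun k hk =>
          h k (Finset.mem_Ioo.mp hk).1 (Finset.mem_Ioo.mp hk).2), hcardIoo]
    constructor
    · constructor
      · rintro (h | h)
        · exfalso; omega
        · have hMv : M = j.val - i.val - 1 := by omega
          have hall := hMeq.mp hMv
          rintro ⟨k, hk1, hk2, hk3, hk4⟩
          have hkne1 : w k ≠ w i := fun h' => hk1.ne' (w.injective h')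
          have hkne2 : w k ≠ w j := fun h' => hk2.ne (w.injective h')
          have hor := (circ_gt hkne1 hkne2 hw).mp ⟨hk3, hk4⟩
          have h2 := hall k hk1 hk2
          rcases hor with h' | h'
          · exact absurd h' h2.1.asymm
          · exact absurd h' h2.2.asymm
      · intro h
        right
        have hall : ∀ k : Fin (n + 1), i < k → k < j → (w j < w k ∧ w k < w i) := by
          intro k hk1 hk2
          have hkne1 : w k ≠ w i := fun h' => hk1.ne' (w.injective h')
          have hkne2 : w k ≠ w j := fun h' => hk2.ne (w.injective h')
          by_contra hcon
          apply h
          refine ⟨k, hk1, hk2, (circ_gt hkne1 hkne2 hw).mpr ?_⟩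
          have e1 : (w k).val ≠ (w i).val := fun h' => hkne1 (Fin.val_injective h')
          have e2 : (w k).val ≠ (w j).val := fun h' => hkne2 (Fin.val_injective h')
          simp only [Fin.lt_def] at hcon ⊢
          omega
        have hMv : M = j.val - i.val - 1 := hMeq.mpr hall
        omega
    · intro hedge
      constructor
      · intro _; exact hw
      · intro _
        rcases hedge with h | h
        · exfalso; omega
        · exact h
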